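/- For all finite simple graphs G and H, the independence-domination number of the Cartesian product satisfies γ^i(G □ H) ≥ γ^i(G) · γ^i(H). -/
import Mathlib


/-- `A` dominates `B` in `G`: every vertex of `B` lies in the closed
neighborhood of some vertex of `A`. -/
def Dominates {V : Type*} (G : SimpleGraph V) (A B : Finset V) : Prop :=
  ∀ b ∈ B, ∃ a ∈ A, a = b ∨ G.Adj a b

/-- `γ_G(B)`: the minimum cardinality of a set of vertices dominating `B`. -/
noncomputable def domNum {V : Type*} (G : SimpleGraph V) (B : Finset V) : ℕ :=
  sInf {n | ∃ A : Finset V, A.card = n ∧ Dominates G A B}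

/-- The domination number `γ(G)`. -/
noncomputable def gamma {V : Type*} [Fintype V] (G : SimpleGraph V) : ℕ :=
  domNum G Finset.univ

/-- `A` is an independent set in `G`. -/
def IndepIn {V : Type*} (G : SimpleGraph V) (A : Finset V) : Prop :=
  ∀ x ∈ A, ∀ y ∈ A, ¬ G.Adj x y

/-- The independence-domination number `γ^i(G)`. -/
noncomputable def gammaI {V : Type*} (G : SimpleGraph V) : ℕ :=
  sSup {n | ∃ A : Finset V, IndepIn G A ∧ domNum G A = n}

private lemma dominates_refl {V : Type*} (G : SimpleGraph V) (B : Finset V) :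
    Dominates G B B := fun b hb => ⟨b, hb, Or.inl rfl⟩

private lemma domNum_le_of_dom {V : Type*} {G : SimpleGraph V} {X B : Finset V}
    (h : Dominates G X B) : domNum G B ≤ X.card :=
  Nat.sInf_le ⟨X, rfl, h⟩

private lemma exists_min_dom {V : Type*} (G : SimpleGraph V) (B : Finset V) :
    ∃ X : Finset V, X.card = domNum G B ∧ Dominates G X B := by
  have h : domNum G B ∈ {n | ∃ A : Finset V, A.card = n ∧ Dominates G A B} :=
    Nat.sInf_mem ⟨B.card, B, rfl, dominates_refl G B⟩
  obtain ⟨X, hX, hd⟩ := h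
  exact ⟨X, hX, hd⟩

/-- The key counting lemma: any set dominating `A ×ˢ B` in `G □ H`
(with `B` independent) has at least `γ_G(A) · γ_H(B)` elements. -/
private lemma key_lemma {V W : Type*} [Fintype V] [Fintype W]
    (G : SimpleGraph V) (H : SimpleGraph W) (A : Finset V) (B : Finset W)
    (hB : IndepIn H B) (D : Finset (V × W))
    (hD : Dominates (G □ H) D (A ×ˢ B)) :
    domNum G A * domNum H B ≤ D.card := by
  classical
  set k := domNum G A with hk
  set l := domNum H B with hl
  obtain ⟨T, hTcard, hTdom⟩ := exists_min_dom G A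
  choose! rep hrepT hrepDom using hTdom
  set S : W → Finset V := fun w => (D.filter fun d => d.2 = w).image Prod.fst with hS
  set U : W → Finset V :=
    fun w => A.filter fun a => ∃ u, u ∉ B ∧ H.Adj u w ∧ (a, u) ∈ D with hU
  set I : W → Finset V := fun w => (U w).image rep with hI
  set Bv : V → Finset W := fun v => B.filter fun b => v ∈ I b with hBv
  set Z : V → Finset W :=
    fun v => Finset.univ.filter fun u => u ∉ B ∧ ∃ a ∈ A, (a, u) ∈ D ∧ rep a = v with hZ
  set ρ : W → ℕ := fun u => (A.filter fun a => (a, u) ∈ D).card with hρ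
  have hIT : ∀ b, I b ⊆ T := by
    intro b v hv
    obtain ⟨a, haU, rfl⟩ := Finset.mem_image.mp hv
    exact hrepT a (Finset.mem_filter.mp haU).1
  -- Claim 1
  have h1 : ∀ b ∈ B, k ≤ (S b).card + (I b).card := by
    intro b hb
    have hdom : Dominates G (S b ∪ I b) A := by
      intro a ha
      obtain ⟨d, hdD, hcase⟩ := hD (a, b) (Finset.mem_product.mpr ⟨ha, hb⟩)
      rcases hcase with heq | hadj
      · refine ⟨a, Finset.mem_union_left _ ?_, Or.inl rfl⟩
        exact Finset.mem_image.mpr ⟨d, Finset.mem_filter.mpr ⟨hdD, by rw [heq]⟩, by rw [heq]⟩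
      · rw [SimpleGraph.boxProd_adj] at hadj
        rcases hadj with ⟨hG, h2⟩ | ⟨hH, h1⟩
        · exact ⟨d.1, Finset.mem_union_left _
            (Finset.mem_image.mpr ⟨d, Finset.mem_filter.mpr ⟨hdD, h2⟩, rfl⟩), Or.inr hG⟩
        · have hd2B : d.2 ∉ B := fun hmem => hB d.2 hmem b hb hH
          have haU : a ∈ U b := by
            refine Finset.mem_filter.mpr ⟨ha, d.2, hd2B, hH, ?_⟩
            have hda : (a, d.2) = d := by
              obtain ⟨d1, d2⟩ := d
              simp only [Prod.mk.injEq]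
              exact ⟨h1.symm, trivial⟩
            rw [hda]; exact hdD
          exact ⟨rep a, Finset.mem_union_right _ (Finset.mem_image.mpr ⟨a, haU, rfl⟩),
            hrepDom a ha⟩
    calc k ≤ (S b ∪ I b).card := domNum_le_of_dom hdom
      _ ≤ (S b).card + (I b).card := Finset.card_union_le _ _
  -- Claim 2
  have h2 : ∀ v ∈ T, l + (Bv v).card ≤ (Z v).card + B.card := by
    intro v _
    have hdom : Dominates H (Z v ∪ (B \ Bv v)) B := by
      intro b hb
      by_cases hbv : b ∈ Bv v
      · have hvI : v ∈ I b := (Finset.mem_filter.mp hbv).2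
        obtain ⟨a, haU, hra⟩ := Finset.mem_image.mp hvI
        obtain ⟨haA, u, huB, huAdj, huD⟩ := Finset.mem_filter.mp haU
        refine ⟨u, Finset.mem_union_left _ ?_, Or.inr huAdj⟩
        exact Finset.mem_filter.mpr ⟨Finset.mem_univ u, huB, a, haA, huD, hra⟩
      · exact ⟨b, Finset.mem_union_right _ (Finset.mem_sdiff.mpr ⟨hb, hbv⟩), Or.inl rfl⟩
    have hle : l ≤ (Z v).card + (B.card - (Bv v).card) := by
      calc l ≤ (Z v ∪ (B \ Bv v)).card := domNum_le_of_dom hdom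
        _ ≤ (Z v).card + (B \ Bv v).card := Finset.card_union_le _ _
        _ = (Z v).card + (B.card - (Bv v).card) := by
            rw [Finset.card_sdiff_of_subset (Finset.filter_subset _ _)]
    have hble : (Bv v).card ≤ B.card := Finset.card_le_card (Finset.filter_subset _ _)
    omega
  -- Claim 3 : double counting I and Bv
  have h3 : ∑ b ∈ B, (I b).card = ∑ v ∈ T, (Bv v).card := by
    have e1 : ∀ b ∈ B, (I b).card = ∑ v ∈ T, if v ∈ I b then 1 else 0 := by
      intro b _
      rw [← Finset.card_filter, Finset.filter_mem_eq_inter,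
        Finset.inter_eq_right.mpr (hIT b)]
    rw [Finset.sum_congr rfl e1, Finset.sum_comm]
    exact Finset.sum_congr rfl fun v _ => (Finset.card_filter _ _).symm
  -- Claim 4
  have h4 : ∑ v ∈ T, (Z v).card ≤ ∑ u ∈ Bᶜ, ρ u := by
    have hZsub : ∀ v, Z v ⊆ Bᶜ := by
      intro v u hu
      exact Finset.mem_compl.mpr (Finset.mem_filter.mp hu).2.1
    have e1 : ∀ v ∈ T, (Z v).card = ∑ u ∈ Bᶜ, if u ∈ Z v then 1 else 0 := by
      intro v _
      rw [← Finset.card_filter, Finset.filter_mem_eq_inter,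
        Finset.inter_eq_right.mpr (hZsub v)]
    rw [Finset.sum_congr rfl e1, Finset.sum_comm]
    apply Finset.sum_le_sum
    intro u _
    rw [← Finset.card_filter]
    calc (T.filter fun v => u ∈ Z v).card
        ≤ ((A.filter fun a => (a, u) ∈ D).image rep).card := by
          apply Finset.card_le_card
          intro v hv
          obtain ⟨hvT, hvZ⟩ := Finset.mem_filter.mp hv
          obtain ⟨_, _, a, haA, haD, hra⟩ := Finset.mem_filter.mp hvZ
          exact Finset.mem_image.mpr ⟨a, Finset.mem_filter.mpr ⟨haA, haD⟩, hra⟩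
      _ ≤ (A.filter fun a => (a, u) ∈ D).card := Finset.card_image_le
      _ = ρ u := rfl
  -- Claim 5 : total count
  have h5 : (∑ b ∈ B, (S b).card) + (∑ u ∈ Bᶜ, ρ u) ≤ D.card := by
    have e1 : ∀ b ∈ B, (S b).card ≤ (D.filter fun d => d.2 = b).card :=
      fun b _ => Finset.card_image_le
    have e2 : ∀ u ∈ Bᶜ, ρ u ≤ (D.filter fun d => d.2 = u ∧ d.1 ∈ A).card := by
      intro u _
      apply Finset.card_le_card_of_injOn (fun a => (a, u))
      · intro a ha
        obtain ⟨haA, haD⟩ := Finset.mem_filter.mp ha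
        exact Finset.mem_filter.mpr ⟨haD, rfl, haA⟩
      · intro a _ a' _ h
        exact (Prod.mk.injEq _ _ _ _).mp h |>.1
    have hdisj1 : ∀ b₁ ∈ B, ∀ b₂ ∈ B, b₁ ≠ b₂ →
        Disjoint (D.filter fun d => d.2 = b₁) (D.filter fun d => d.2 = b₂) := by
      intro b₁ _ b₂ _ hne
      rw [Finset.disjoint_left]
      intro d hd1 hd2
      exact hne ((Finset.mem_filter.mp hd1).2 ▸ (Finset.mem_filter.mp hd2).2.symm ▸ rfl)
    have hdisj2 : ∀ u₁ ∈ Bᶜ, ∀ u₂ ∈ Bᶜ, u₁ ≠ u₂ →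
        Disjoint (D.filter fun d => d.2 = u₁ ∧ d.1 ∈ A)
          (D.filter fun d => d.2 = u₂ ∧ d.1 ∈ A) := by
      intro u₁ _ u₂ _ hne
      rw [Finset.disjoint_left]
      intro d hd1 hd2
      exact hne ((Finset.mem_filter.mp hd1).2.1 ▸ (Finset.mem_filter.mp hd2).2.1.symm ▸ rfl)
    have hdisjU : Disjoint (B.biUnion fun b => D.filter fun d => d.2 = b)
        (Bᶜ.biUnion fun u => D.filter fun d => d.2 = u ∧ d.1 ∈ A) := by
      rw [Finset.disjoint_left]
      intro d hd1 hd2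
      obtain ⟨b, hbB, hdf⟩ := Finset.mem_biUnion.mp hd1
      obtain ⟨u, huB, hdf2⟩ := Finset.mem_biUnion.mp hd2
      have hb : d.2 = b := (Finset.mem_filter.mp hdf).2
      have hu : d.2 = u := (Finset.mem_filter.mp hdf2).2.1
      exact (Finset.mem_compl.mp huB) (hu ▸ hb ▸ hbB)
    calc (∑ b ∈ B, (S b).card) + (∑ u ∈ Bᶜ, ρ u)
        ≤ (∑ b ∈ B, (D.filter fun d => d.2 = b).card)
          + (∑ u ∈ Bᶜ, (D.filter fun d => d.2 = u ∧ d.1 ∈ A).card) :=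
          add_le_add (Finset.sum_le_sum e1) (Finset.sum_le_sum e2)
      _ = (B.biUnion fun b => D.filter fun d => d.2 = b).card
          + (Bᶜ.biUnion fun u => D.filter fun d => d.2 = u ∧ d.1 ∈ A).card := by
          rw [Finset.card_biUnion hdisj1, Finset.card_biUnion hdisj2]
      _ = ((B.biUnion fun b => D.filter fun d => d.2 = b)
          ∪ (Bᶜ.biUnion fun u => D.filter fun d => d.2 = u ∧ d.1 ∈ A)).card :=
          (Finset.card_union_of_disjoint hdisjU).symm
      _ ≤ D.card := by
          apply Finset.card_le_card
          apply Finset.union_subset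
          · exact Finset.biUnion_subset.mpr fun b _ => Finset.filter_subset _ _
          · exact Finset.biUnion_subset.mpr fun u _ => Finset.filter_subset _ _
  -- assemble
  have h1s : k * B.card ≤ (∑ b ∈ B, (S b).card) + ∑ b ∈ B, (I b).card := by
    calc k * B.card = ∑ _b ∈ B, k := by rw [Finset.sum_const, smul_eq_mul, mul_comm]
      _ ≤ ∑ b ∈ B, ((S b).card + (I b).card) := Finset.sum_le_sum h1
      _ = _ := Finset.sum_add_distrib
  have h2s : T.card * l + (∑ v ∈ T, (Bv v).card)
      ≤ (∑ v ∈ T, (Z v).card) + T.card * B.card := by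
    calc T.card * l + (∑ v ∈ T, (Bv v).card) = ∑ v ∈ T, (l + (Bv v).card) := by
          rw [Finset.sum_add_distrib, Finset.sum_const, smul_eq_mul]
      _ ≤ ∑ v ∈ T, ((Z v).card + B.card) := Finset.sum_le_sum h2
      _ = _ := by rw [Finset.sum_add_distrib, Finset.sum_const, smul_eq_mul]
  rw [hTcard] at h2s
  -- from h1s, h3, h2s, h4, h5 : k * l ≤ D.card
  have : k * l ≤ D.card := by linarith [h1s, h3.le, h3.ge, h2s, h4, h5]
  exact this

private lemma gammaI_bddAbove {V : Type*} [Fintype V] (G : SimpleGraph V) :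
    BddAbove {n | ∃ A : Finset V, IndepIn G A ∧ domNum G A = n} := by
  refine ⟨Fintype.card V, ?_⟩
  rintro n ⟨A, _, rfl⟩
  exact le_trans (domNum_le_of_dom (dominates_refl G A)) (Finset.card_le_univ A)

private lemma gammaI_mem {V : Type*} [Fintype V] (G : SimpleGraph V) :
    ∃ A : Finset V, IndepIn G A ∧ domNum G A = gammaI G := by
  have hne : {n | ∃ A : Finset V, IndepIn G A ∧ domNum G A = n}.Nonempty :=
    ⟨domNum G ∅, ∅, fun x hx => absurd hx (Finset.notMem_empty x), rfl⟩
  exact Nat.sSup_mem hne (gammaI_bddAbove G)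

/-- For all finite graphs `G` and `H`, `γ^i(G □ H) ≥ γ^i(G) ⬝ γ^i(H)`. -/
theorem gammaI_boxProd_ge {V W : Type*} [Fintype V] [Fintype W]
    (G : SimpleGraph V) (H : SimpleGraph W) :
    gammaI (G □ H) ≥ gammaI G * gammaI H := by
  classical
  obtain ⟨A, hAi, hAv⟩ := gammaI_mem G
  obtain ⟨B, hBi, hBv⟩ := gammaI_mem H
  have hind : IndepIn (G □ H) (A ×ˢ B) := by
    rintro ⟨x1, x2⟩ hx ⟨y1, y2⟩ hy hadj
    rw [SimpleGraph.boxProd_adj] at hadj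
    obtain ⟨hx1, hx2⟩ := Finset.mem_product.mp hx
    obtain ⟨hy1, hy2⟩ := Finset.mem_product.mp hy
    rcases hadj with ⟨h, _⟩ | ⟨h, _⟩
    · exact hAi x1 hx1 y1 hy1 h
    · exact hBi x2 hx2 y2 hy2 h
  have hle : domNum (G □ H) (A ×ˢ B) ≤ gammaI (G □ H) :=
    le_csSup (gammaI_bddAbove (G □ H)) ⟨A ×ˢ B, hind, rfl⟩
  obtain ⟨D, hDc, hDd⟩ := exists_min_dom (G □ H) (A ×ˢ B)
  have hkey := key_lemma G H A B hBi D hDd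
  rw [hAv, hBv] at hkey
  exact le_trans (le_trans hkey hDc.le) hle
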